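/- Consider the class 𝒟 of Dirac K-segment instances: weights α_1,…,α_K ≥ 0 with Σ_k α_k = 1 and values v_1,…,v_K > 0, with Π* = Σ_k α_k·v_k > 0 and Π^U = sup_{p > 0} Σ_k α_k·p·𝟙{p ≤ v_k}. Then the infimum over 𝒟 of the profit ratio Π^U/Π* equals exactly 1/K; i.e., every Dirac instance satisfies Π^U ≥ Π*/K, and for every δ > 0 there is a Dirac instance with Π^U/Π* < 1/K + δ. -/

import Mathlib

lemma my_geom_bound {r : ℝ} (h0 : 0 ≤ r) (h1 : r < 1) (n : ℕ) :
    ∑ i ∈ Finset.range n, r ^ i ≤ 1 / (1 - r) := by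
  rw [geom_sum_eq h1.ne n]
  have h2 : (r ^ n - 1) / (r - 1) = (1 - r ^ n) / (1 - r) := by
    rw [← neg_div_neg_eq]; ring_nf
  have hrn : 0 ≤ r ^ n := pow_nonneg h0 n
  rw [h2]
  gcongr
  · linarith

lemma part1 (K : ℕ) (hK : 1 ≤ K) (α v : Fin K → ℝ) (hα : ∀ k, 0 ≤ α k)
    (hsum : ∑ k, α k = 1) (hv : ∀ k, 0 < v k) (hpos : 0 < ∑ k, α k * v k) :
    sSup ((fun p => ∑ k, α k * (if p ≤ v k then p else 0)) '' Set.Ioi 0)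
      ≥ (∑ k, α k * v k) / K := by
  set P := ∑ k, α k * v k with hP
  -- the set is bounded above by P
  have hbdd : ∀ p ∈ Set.Ioi (0:ℝ), ∑ k, α k * (if p ≤ v k then p else 0) ≤ P := by
    intro p hp
    apply Finset.sum_le_sum
    intro k _
    have := hα k
    split
    · nlinarith [(hv k).le, ‹p ≤ v k›]
    · nlinarith [(hv k).le]
  have hBdd : BddAbove ((fun p => ∑ k, α k * (if p ≤ v k then p else 0)) '' Set.Ioi 0) := by
    refine ⟨P, ?_⟩
    rintro x ⟨p, hp, rfl⟩
    exact hbdd p hp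
  -- find a segment with α k * v k ≥ P / K
  have hcard : (Finset.univ : Finset (Fin K)).card = K := by simp
  have hne : (Finset.univ : Finset (Fin K)).Nonempty := by
    rw [← Finset.card_pos, hcard]; omega
  obtain ⟨k₀, -, hk₀⟩ := Finset.exists_le_of_sum_le hne
    (f := fun _ => P / K) (g := fun k => α k * v k) (by
      rw [Finset.sum_const, hcard, nsmul_eq_mul]
      rw [mul_div_cancel₀]
      positivity)
  -- the profit at price v k₀ is at least α k₀ * v k₀
  have hmem : (fun p => ∑ k, α k * (if p ≤ v k then p else 0)) (v k₀)
      ∈ ((fun p => ∑ k, α k * (if p ≤ v k then p else 0)) '' Set.Ioi 0) :=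
    Set.mem_image_of_mem _ (hv k₀)
  have hge : α k₀ * v k₀ ≤ ∑ k, α k * (if v k₀ ≤ v k then v k₀ else 0) := by
    have := Finset.single_le_sum (f := fun k => α k * (if v k₀ ≤ v k then v k₀ else 0))
      (fun k _ => by
        have := hα k
        split
        · exact mul_nonneg (hα k) (hv k₀).le
        · simp) (Finset.mem_univ k₀)
    simpa using this
  calc P / K ≤ α k₀ * v k₀ := hk₀
    _ ≤ ∑ k, α k * (if v k₀ ≤ v k then v k₀ else 0) := hge
    _ ≤ sSup _ := le_csSup hBdd hmem

lemma part2 (K : ℕ) (hK : 1 ≤ K) (δ : ℝ) (hδ : 0 < δ) :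
    ∃ α v : Fin K → ℝ, (∀ k, 0 ≤ α k) ∧ (∑ k, α k = 1) ∧
      (∀ k, 0 < v k) ∧ 0 < ∑ k, α k * v k ∧
      sSup ((fun p => ∑ k, α k * (if p ≤ v k then p else 0)) '' Set.Ioi 0) /
          (∑ k, α k * v k) < 1 / K + δ := by
  classical
  set M : ℝ := 2 + 1/δ with hM
  have hδ' : 0 < 1/δ := by positivity
  have hM1 : 1 < M := by rw [hM]; linarith
  have hM0 : 0 < M := by linarith
  set r : ℝ := 1 / M with hr
  have hr0 : 0 < r := by positivity
  have hr1 : r < 1 := by rw [hr, div_lt_one hM0]; linarith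
  have hrM : r * M = 1 := by rw [hr]; field_simp
  set S : ℝ := ∑ k : Fin K, r ^ (k:ℕ) with hS
  have hS0 : 0 < S :=
    Finset.sum_pos (fun k _ => pow_pos hr0 _) ⟨⟨0, by omega⟩, Finset.mem_univ _⟩
  have hK0 : (0:ℝ) < K := by exact_mod_cast Nat.pos_of_ne_zero (by omega)
  refine ⟨fun k => r ^ (k:ℕ) / S, fun k => M ^ (k:ℕ), fun k => by positivity,
    ?_, fun k => by positivity, ?_, ?_⟩
  · rw [← Finset.sum_div, ← hS, div_self hS0.ne']
  · have hPstar : ∑ k : Fin K, (r ^ (k:ℕ) / S) * M ^ (k:ℕ) = K / S := by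
      have h1 : ∀ k : Fin K, r ^ (k:ℕ) / S * M ^ (k:ℕ) = 1 / S := fun k => by
        rw [div_mul_eq_mul_div, ← mul_pow, hrM, one_pow]
      rw [Finset.sum_congr rfl fun k _ => h1 k]
      rw [Finset.sum_const, Finset.card_univ, Fintype.card_fin, nsmul_eq_mul, mul_one_div]
    rw [hPstar]; positivity
  · have hPstar : ∑ k : Fin K, (r ^ (k:ℕ) / S) * M ^ (k:ℕ) = K / S := by
      have h1 : ∀ k : Fin K, r ^ (k:ℕ) / S * M ^ (k:ℕ) = 1 / S := fun k => by
        rw [div_mul_eq_mul_div, ← mul_pow, hrM, one_pow]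
      rw [Finset.sum_congr rfl fun k _ => h1 k]
      rw [Finset.sum_const, Finset.card_univ, Fintype.card_fin, nsmul_eq_mul, mul_one_div]
    have h1r : 0 < 1 - r := by linarith
    set B : ℝ := (1 / (1 - r)) / S with hB
    have hB0 : 0 ≤ B := by positivity
    -- every uniform-price profit is at most B
    have hub : ∀ p ∈ Set.Ioi (0:ℝ),
        (∑ k : Fin K, (r ^ (k:ℕ) / S) * (if p ≤ M ^ (k:ℕ) then p else 0)) ≤ B := by
      intro p hp
      simp only [Set.mem_Ioi] at hp
      by_cases hcase : ∃ n, p ≤ M ^ n ∧ n ≤ K - 1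
      · obtain ⟨n₀, hn₀, -⟩ := hcase
        have hex : ∃ n, p ≤ M ^ n := ⟨n₀, hn₀⟩
        set j := Nat.find hex with hj
        have hpj : p ≤ M ^ j := Nat.find_spec hex
        calc ∑ k : Fin K, (r ^ (k:ℕ) / S) * (if p ≤ M ^ (k:ℕ) then p else 0)
            ≤ ∑ k : Fin K, (1 / S) * (if j ≤ (k:ℕ) then r ^ ((k:ℕ) - j) else 0) := by
              apply Finset.sum_le_sum
              intro k _
              by_cases hk : p ≤ M ^ (k:ℕ)
              · have hjk : j ≤ (k:ℕ) := Nat.find_min' hex hk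
                rw [if_pos hk, if_pos hjk]
                have key : r ^ (k:ℕ) * M ^ j = r ^ ((k:ℕ) - j) := by
                  have hkk : (k:ℕ) = ((k:ℕ) - j) + j := (Nat.sub_add_cancel hjk).symm
                  calc r ^ (k:ℕ) * M ^ j = r ^ (((k:ℕ) - j) + j) * M ^ j := by rw [← hkk]
                    _ = r ^ ((k:ℕ) - j) * (r * M) ^ j := by rw [pow_add, mul_pow]; ring
                    _ = r ^ ((k:ℕ) - j) := by rw [hrM, one_pow, mul_one]
                calc r ^ (k:ℕ) / S * p ≤ r ^ (k:ℕ) / S * M ^ j := by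
                      apply mul_le_mul_of_nonneg_left hpj (by positivity)
                  _ = 1 / S * r ^ ((k:ℕ) - j) := by
                      rw [div_mul_eq_mul_div, key, one_div_mul_eq_div]
              · rw [if_neg hk, mul_zero]
                have h0 : (0:ℝ) ≤ if j ≤ (k:ℕ) then r ^ ((k:ℕ) - j) else 0 := by
                  split
                  · positivity
                  · exact le_refl 0
                exact mul_nonneg (by positivity) h0
          _ = (1 / S) * ∑ k : Fin K, (if j ≤ (k:ℕ) then r ^ ((k:ℕ) - j) else 0) := by
              rw [Finset.mul_sum]
          _ ≤ (1 / S) * (1 / (1 - r)) := by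
              apply mul_le_mul_of_nonneg_left ?_ (by positivity)
              rw [Fin.sum_univ_eq_sum_range (fun k => if j ≤ k then r ^ (k - j) else 0) K]
              by_cases hjK : j ≤ K
              · rw [Finset.range_eq_Ico,
                  ← Finset.sum_Ico_consecutive _ (Nat.zero_le j) hjK]
                have hz : ∑ k ∈ Finset.Ico 0 j, (if j ≤ k then r ^ (k - j) else 0) = 0 := by
                  apply Finset.sum_eq_zero
                  intro k hkmem
                  rw [Finset.mem_Ico] at hkmem
                  rw [if_neg (by omega)]
                rw [hz, zero_add, Finset.sum_Ico_eq_sum_range]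
                have hsimp : ∀ i ∈ Finset.range (K - j),
                    (if j ≤ j + i then r ^ (j + i - j) else 0) = r ^ i := by
                  intro i _
                  rw [if_pos (Nat.le_add_right _ _)]
                  congr 1
                  omega
                rw [Finset.sum_congr rfl hsimp]
                exact my_geom_bound hr0.le hr1 _
              · have hz : ∑ k ∈ Finset.range K, (if j ≤ k then r ^ (k - j) else 0) = 0 := by
                  apply Finset.sum_eq_zero
                  intro k hkmem
                  rw [Finset.mem_range] at hkmem
                  rw [if_neg (by omega)]
                rw [hz]
                positivity
          _ = B := by rw [hB, mul_comm, mul_one_div]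
      · push_neg at hcase
        have hz : ∑ k : Fin K, (r ^ (k:ℕ) / S) * (if p ≤ M ^ (k:ℕ) then p else 0) = 0 := by
          apply Finset.sum_eq_zero
          intro k _
          have hnk : ¬ p ≤ M ^ (k:ℕ) := fun h => by
            have h2 := hcase (k:ℕ) h
            have := k.isLt
            omega
          rw [if_neg hnk, mul_zero]
        rw [hz]; exact hB0
    have hsup : sSup ((fun p => ∑ k : Fin K,
        (r ^ (k:ℕ) / S) * (if p ≤ M ^ (k:ℕ) then p else 0)) '' Set.Ioi 0) ≤ B :=
      Real.sSup_le (by rintro x ⟨p, hp, rfl⟩; exact hub p hp) hB0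
    have hrδ : r * (1 + 2 * δ) = δ := by
      rw [hr, hM, div_mul_eq_mul_div,
        div_eq_iff (by positivity : (0:ℝ) < 2 + 1/δ).ne']
      field_simp
      ring
    have hKge : (1:ℝ) ≤ K := by exact_mod_cast hK
    have step1 : r / (1 - r) < δ := by
      rw [div_lt_iff₀ h1r]; nlinarith [hr0, hδ]
    have step2 : r / ((1 - r) * K) ≤ r / (1 - r) := by
      rw [div_le_div_iff₀ (by positivity) h1r]
      nlinarith [mul_nonneg (mul_nonneg hr0.le h1r.le)
        (by linarith : (0:ℝ) ≤ (K:ℝ) - 1)]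
    have e : 1 / ((1 - r) * K) = 1 / (K:ℝ) + r / ((1 - r) * K) := by
      field_simp
      ring
    have hfin : 1 / ((1 - r) * K) < 1 / K + δ := by
      rw [e]; linarith
    have eB : B / ((K:ℝ) / S) = 1 / ((1 - r) * K) := by
      rw [hB]; field_simp
    calc sSup ((fun p => ∑ k : Fin K,
          (r ^ (k:ℕ) / S) * (if p ≤ M ^ (k:ℕ) then p else 0)) '' Set.Ioi 0) /
          (∑ k : Fin K, (r ^ (k:ℕ) / S) * M ^ (k:ℕ))
        ≤ B / ((K:ℝ) / S) := by
          rw [hPstar]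
          apply div_le_div_of_nonneg_right hsup (by positivity) |>.trans_eq rfl
      _ = 1 / ((1 - r) * K) := eB
      _ < 1 / K + δ := hfin

/-- **Worst-case performance over Dirac instances is exactly `1/K`.**
Every Dirac `K`-segment instance (weights `α k ≥ 0` summing to one, values
`v k > 0`, uniform-price profit `Π^U = sup_{p>0} Σ_k α_k p 𝟙{p ≤ v k}` and
full-surplus profit `Π* = Σ_k α_k v_k > 0`) satisfies `Π^U ≥ Π*/K`, and for
every `δ > 0` some Dirac instance has profit ratio `Π^U/Π* < 1/K + δ`; i.e.
the infimum of the profit ratio over Dirac instances equals `1/K`. -/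
theorem dirac_worst_case_ratio (K : ℕ) (hK : 1 ≤ K) :
    (∀ α v : Fin K → ℝ, (∀ k, 0 ≤ α k) → (∑ k, α k = 1) →
      (∀ k, 0 < v k) → 0 < ∑ k, α k * v k →
      sSup ((fun p => ∑ k, α k * (if p ≤ v k then p else 0)) '' Set.Ioi 0)
        ≥ (∑ k, α k * v k) / K) ∧
    (∀ δ : ℝ, 0 < δ →
      ∃ α v : Fin K → ℝ, (∀ k, 0 ≤ α k) ∧ (∑ k, α k = 1) ∧
        (∀ k, 0 < v k) ∧ 0 < ∑ k, α k * v k ∧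
        sSup ((fun p => ∑ k, α k * (if p ≤ v k then p else 0)) '' Set.Ioi 0) /
            (∑ k, α k * v k) < 1 / K + δ) := by
  exact ⟨fun α v hα hsum hv hpos => part1 K hK α v hα hsum hv hpos,
    fun δ hδ => part2 K hK δ hδ⟩
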